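/- Let γ : [0, 2π) → ℝ², γ(ρ) = s + r(ρ)(cos ρ, sin ρ) with r : ℝ → (0, ∞) continuous and 2π-periodic. Then γ is injective, and the image of γ is the boundary of the star-shaped set S = {s + t(cos ρ, sin ρ) : ρ ∈ [0, 2π), 0 ≤ t ≤ r(ρ)}, which is star-shaped with reference point s. -/

import Mathlib

open Real in
theorem polar_curve_boundary_starShaped (s : ℝ × ℝ) (r : ℝ → ℝ)
    (hr : Continuous r) (hrpos : ∀ ρ, 0 < r ρ)
    (hper : ∀ ρ, r (ρ + 2 * π) = r ρ)
    (γ : ℝ → ℝ × ℝ) (hγ : γ = fun ρ => s + r ρ • (Real.cos ρ, Real.sin ρ)) :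
    ∀ S : Set (ℝ × ℝ),
      S = {p | ∃ ρ ∈ Set.Ico 0 (2 * π), ∃ t, 0 ≤ t ∧ t ≤ r ρ ∧
                p = s + t • (Real.cos ρ, Real.sin ρ)} →
      Set.InjOn γ (Set.Ico 0 (2 * π)) ∧
      γ '' Set.Ico 0 (2 * π) = frontier S ∧
      StarConvex ℝ s S := by
  intro S hS
  have two_pi_pos : (0:ℝ) < 2 * π := by positivity
  have hperiodic : Function.Periodic r (2 * π) := hper
  -- periodicity for integer multiples
  have hper' : ∀ (n : ℤ) (θ : ℝ), r (θ + n * (2 * π)) = r θ := by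
    intro n θ
    simpa using (hperiodic.sub_int_mul_eq (x := θ + n * (2 * π)) n).symm
  -- angle reduction into [0, 2π)
  have hred : ∀ θ : ℝ, ∃ ρ ∈ Set.Ico 0 (2*π),
      Real.cos ρ = Real.cos θ ∧ Real.sin ρ = Real.sin θ ∧ r ρ = r θ := by
    intro θ
    refine ⟨toIcoMod two_pi_pos 0 θ, by simpa using toIcoMod_mem_Ico two_pi_pos 0 θ, ?_⟩
    obtain ⟨n, hn⟩ : ∃ n : ℤ, θ = toIcoMod two_pi_pos 0 θ + n * (2*π) := by
      refine ⟨toIcoDiv two_pi_pos 0 θ, ?_⟩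
      have := toIcoMod_add_toIcoDiv_zsmul two_pi_pos 0 θ
      rw [zsmul_eq_mul] at this
      linarith
    refine ⟨?_, ?_, ?_⟩
    · conv_rhs => rw [hn]
      rw [Real.cos_add_int_mul_two_pi]
    · conv_rhs => rw [hn]
      rw [Real.sin_add_int_mul_two_pi]
    · conv_rhs => rw [hn]
      rw [hper']
  -- membership lemma
  have hmem : ∀ (θ t : ℝ), 0 ≤ t → t ≤ r θ → s + t • (Real.cos θ, Real.sin θ) ∈ S := by
    intro θ t ht htr
    obtain ⟨ρ, hρ, hc, hs', hrr⟩ := hred θ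
    rw [hS]
    exact ⟨ρ, hρ, t, ht, by rw [hrr]; exact htr, by rw [hc, hs']⟩
  -- r depends only on the direction
  have hru : ∀ θ₁ θ₂ : ℝ, Real.cos θ₁ = Real.cos θ₂ → Real.sin θ₁ = Real.sin θ₂ →
      r θ₁ = r θ₂ := by
    intro θ₁ θ₂ hc hs'
    have h1 : Real.cos (θ₁ - θ₂) = 1 := by
      rw [Real.cos_sub, hc, hs']
      nlinarith [Real.sin_sq_add_cos_sq θ₂]
    obtain ⟨n, hn⟩ := (Real.cos_eq_one_iff _).mp h1
    have hθ : θ₁ = θ₂ + n * (2*π) := by linarith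
    rw [hθ, hper']
  -- angles in [0,2π) with equal cos and sin coincide
  have hinj_angle : ∀ a b : ℝ, a ∈ Set.Ico 0 (2*π) → b ∈ Set.Ico 0 (2*π) →
      Real.cos a = Real.cos b → Real.sin a = Real.sin b → a = b := by
    intro a b ha hb hc hs'
    have h1 : Real.cos (a - b) = 1 := by
      rw [Real.cos_sub, hc, hs']
      nlinarith [Real.sin_sq_add_cos_sq b]
    obtain ⟨n, hn⟩ := (Real.cos_eq_one_iff _).mp h1
    have hn0 : n = 0 := by
      rcases lt_trichotomy n 0 with h' | h' | h'
      · have : (n : ℝ) ≤ -1 := by exact_mod_cast Int.le_sub_one_iff.mpr h'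
        nlinarith [pi_pos, ha.1, ha.2, hb.1, hb.2]
      · exact h'
      · have : (1 : ℝ) ≤ (n : ℝ) := by exact_mod_cast h'
        nlinarith [pi_pos, ha.1, ha.2, hb.1, hb.2]
    rw [hn0] at hn
    simp at hn
    linarith
  -- points strictly outside are not in S
  have hout : ∀ (θ t : ℝ), r θ < t → s + t • (Real.cos θ, Real.sin θ) ∉ S := by
    intro θ t htr hmem'
    rw [hS] at hmem'
    obtain ⟨ρ, hρ, t', ht', ht'r, heq⟩ := hmem'
    have ht0 : 0 < t := lt_trans (hrpos θ) htr
    have hv := add_left_cancel heq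
    rw [Prod.ext_iff] at hv
    simp only [Prod.smul_mk, smul_eq_mul] at hv
    obtain ⟨h1, h2⟩ := hv
    have hsq : t^2 = t'^2 := by
      have hss : (t * Real.cos θ)^2 + (t * Real.sin θ)^2
          = (t' * Real.cos ρ)^2 + (t' * Real.sin ρ)^2 := by rw [h1, h2]
      nlinarith [Real.sin_sq_add_cos_sq θ, Real.sin_sq_add_cos_sq ρ, hss]
    have htt : t = t' := le_antisymm (by nlinarith) (by nlinarith)
    subst htt
    have hcc : Real.cos θ = Real.cos ρ := by
      have := mul_left_cancel₀ (ne_of_gt ht0) h1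
      exact this
    have hss : Real.sin θ = Real.sin ρ := mul_left_cancel₀ (ne_of_gt ht0) h2
    have := hru θ ρ hcc hss
    linarith
  -- S is closed (it is compact)
  have hScl : IsClosed S := by
    have himg : S = (fun x : ℝ × ℝ => s + (x.2 * r x.1) • (Real.cos x.1, Real.sin x.1)) ''
        (Set.Icc 0 (2*π) ×ˢ Set.Icc (0:ℝ) 1) := by
      apply Set.Subset.antisymm
      · intro p hp
        rw [hS] at hp
        obtain ⟨ρ, hρ, t, ht, htr, rfl⟩ := hp
        refine ⟨(ρ, t / r ρ), ⟨⟨hρ.1, hρ.2.le⟩,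
          div_nonneg ht (hrpos ρ).le, (div_le_one (hrpos ρ)).mpr htr⟩, ?_⟩
        simp only
        rw [div_mul_cancel₀ _ (ne_of_gt (hrpos ρ))]
      · rintro p ⟨⟨ρ, u⟩, ⟨hρ, hu⟩, rfl⟩
        exact hmem ρ (u * r ρ) (mul_nonneg hu.1 (hrpos ρ).le)
          (mul_le_of_le_one_left (hrpos ρ).le hu.2)
    rw [himg]
    refine ((isCompact_Icc.prod isCompact_Icc).image ?_).isClosed
    exact continuous_const.add ((continuous_snd.mul (hr.comp continuous_fst)).smul
      (((Real.continuous_cos.comp continuous_fst)).prodMk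
        ((Real.continuous_sin.comp continuous_fst))))
  -- minimum of r
  obtain ⟨ρ₀, hρ₀, hmin'⟩ := isCompact_Icc.exists_isMinOn
    (Set.nonempty_Icc.mpr two_pi_pos.le) (hr.continuousOn (s := Set.Icc 0 (2*π)))
  have hmin := isMinOn_iff.mp hmin'
  have hlow : ∀ θ, r ρ₀ ≤ r θ := by
    intro θ
    obtain ⟨ρ, hρ, _, _, hrr⟩ := hred θ
    rw [← hrr]
    exact hmin ρ ⟨hρ.1, hρ.2.le⟩
  have hm0 : 0 < r ρ₀ := hrpos ρ₀
  -- polar representation of nonzero vectors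
  have hrep : ∀ v : ℝ × ℝ, v ≠ 0 → ∃ θ : ℝ,
      v = (‖(v.1 : ℂ) + v.2 * Complex.I‖) • (Real.cos θ, Real.sin θ) := by
    intro v hv
    set z : ℂ := (v.1 : ℂ) + v.2 * Complex.I with hz
    have hz0 : z ≠ 0 := by
      intro h
      apply hv
      rw [Complex.ext_iff] at h
      simp [hz] at h
      exact Prod.ext h.1 h.2
    refine ⟨Complex.arg z, ?_⟩
    have key := Complex.norm_mul_exp_arg_mul_I z
    rw [Complex.ext_iff] at key
    simp only [Complex.exp_mul_I] at key
    obtain ⟨k1, k2⟩ := key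
    simp only [hz, Complex.add_re, Complex.ofReal_re, Complex.mul_re, Complex.I_re,
      Complex.I_im, Complex.ofReal_im, Complex.add_im, Complex.mul_im,
      Complex.cos_ofReal_re, Complex.sin_ofReal_re, Complex.cos_ofReal_im,
      Complex.sin_ofReal_im] at k1 k2
    apply Prod.ext <;> simp only [Prod.smul_mk, smul_eq_mul] <;> [skip; skip] <;> nlinarith [k1, k2]
  -- s is in the interior of S
  have hsS : s ∈ S := by
    have h0 : s + (0:ℝ) • (Real.cos 0, Real.sin 0) = s := by simp
    rw [← h0]
    exact hmem 0 0 le_rfl (hrpos 0).le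
  have hs_int : s ∈ interior S := by
    rw [mem_interior_iff_mem_nhds]
    refine Filter.mem_of_superset (Metric.ball_mem_nhds s (by positivity : (0:ℝ) < r ρ₀ / 2)) ?_
    intro q hq
    rw [Metric.mem_ball] at hq
    by_cases hq0 : q = s
    · rw [hq0]; exact hsS
    · obtain ⟨θ, hθ⟩ := hrep (q - s) (sub_ne_zero.mpr hq0)
      set a := ‖((q - s).1 : ℂ) + (q - s).2 * Complex.I‖ with ha
      have hqe : q = s + a • (Real.cos θ, Real.sin θ) := by
        rw [← hθ]; abel
      rw [hqe]
      apply hmem θ a (norm_nonneg _)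
      have hb1 : a ≤ |(q-s).1| + |(q-s).2| := by
        refine le_trans (Complex.norm_le_abs_re_add_abs_im _) ?_
        simp
      have hd1 : |(q - s).1| ≤ dist q s := by
        have h' : |(q - s).1| = dist q.1 s.1 := by rw [Real.dist_eq, Prod.fst_sub]
        rw [h', Prod.dist_eq]; exact le_max_left _ _
      have hd2 : |(q - s).2| ≤ dist q s := by
        have h' : |(q - s).2| = dist q.2 s.2 := by rw [Real.dist_eq, Prod.snd_sub]
        rw [h', Prod.dist_eq]; exact le_max_right _ _
      refine le_of_lt ?_
      calc a ≤ |(q-s).1| + |(q-s).2| := hb1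
        _ ≤ dist q s + dist q s := add_le_add hd1 hd2
        _ < r ρ₀ / 2 + r ρ₀ / 2 := by linarith
        _ = r ρ₀ := by ring
        _ ≤ r θ := hlow θ
  -- interior membership at intermediate radius
  have hint : ∀ (ρ t : ℝ), 0 < t → t < r ρ →
      s + t • (Real.cos ρ, Real.sin ρ) ∈ interior S := by
    intro ρ t ht htr
    set p := s + t • (Real.cos ρ, Real.sin ρ) with hp
    rw [mem_interior_iff_mem_nhds]
    set F : ℝ × ℝ → ℂ := fun q =>
      ((q.1 - s.1 : ℝ) + (q.2 - s.2 : ℝ) * Complex.I) * Complex.exp (-(ρ:ℂ) * Complex.I)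
      with hF
    have hp1 : p.1 = s.1 + t * Real.cos ρ := by simp [hp]
    have hp2 : p.2 = s.2 + t * Real.sin ρ := by simp [hp]
    have hFp : F p = (t : ℂ) := by
      have hz : ((p.1 - s.1 : ℝ) : ℂ) + ((p.2 - s.2 : ℝ) : ℂ) * Complex.I
          = t * Complex.exp ((ρ:ℂ) * Complex.I) := by
        rw [hp1, hp2]
        have e1 : (s.1 + t * Real.cos ρ - s.1 : ℝ) = t * Real.cos ρ := by ring
        have e2 : (s.2 + t * Real.sin ρ - s.2 : ℝ) = t * Real.sin ρ := by ring
        rw [e1, e2, Complex.exp_mul_I, ← Complex.ofReal_cos, ← Complex.ofReal_sin]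
        push_cast; ring
      rw [hF]
      simp only
      rw [hz, mul_assoc, ← Complex.exp_add]
      simp
    have hFcont : Continuous F := by
      rw [hF]
      fun_prop
    have hargcont : ContinuousAt Complex.arg (F p) := by
      apply Complex.continuousAt_arg
      rw [hFp]
      exact Complex.mem_slitPlane_iff.mpr (Or.inl (by simpa using ht))
    set g : ℝ × ℝ → ℝ := fun q => ρ + Complex.arg (F q) with hg
    have hgcont : ContinuousAt g p :=
      continuousAt_const.add (hargcont.comp hFcont.continuousAt)
    have hgp : g p = ρ := by
      simp [hg, hFp, Complex.arg_ofReal_of_nonneg ht.le]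
    have h1 : ∀ᶠ q in nhds p, ‖F q‖ < r (g q) := by
      have hc : ContinuousAt (fun q => r (g q) - ‖F q‖) p :=
        ((hr.continuousAt).comp hgcont).sub
          ((continuous_norm.comp hFcont).continuousAt)
      have hpos : (0:ℝ) < r (g p) - ‖F p‖ := by
        rw [hgp, hFp]
        rw [Complex.norm_real, Real.norm_eq_abs, abs_of_pos ht]
        linarith
      have := hc.eventually (eventually_gt_nhds hpos)
      filter_upwards [this] with q hq
      linarith [hq]
    have h2 : ∀ᶠ q in nhds p, 0 < (F q).re := by
      have hc : ContinuousAt (fun q => (F q).re) p :=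
        (Complex.continuous_re.comp hFcont).continuousAt
      have hpos : (0:ℝ) < (F p).re := by rw [hFp]; simpa using ht
      exact hc.eventually (eventually_gt_nhds hpos)
    filter_upwards [h1, h2] with q hq1 hq2
    have hFne : F q ≠ 0 := by
      intro h
      rw [h] at hq2
      simp at hq2
    have key : ((q.1 - s.1 : ℝ) : ℂ) + ((q.2 - s.2 : ℝ) : ℂ) * Complex.I
        = (‖F q‖ : ℂ) * Complex.exp ((g q : ℂ) * Complex.I) := by
      have h3 := Complex.norm_mul_exp_arg_mul_I (F q)
      have h4 : ((q.1 - s.1 : ℝ) : ℂ) + ((q.2 - s.2 : ℝ) : ℂ) * Complex.I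
          = F q * Complex.exp ((ρ:ℂ) * Complex.I) := by
        rw [hF]
        simp only
        rw [mul_assoc, ← Complex.exp_add]
        simp
      have hgq : ((F q).arg : ℂ) * Complex.I + (ρ:ℂ) * Complex.I = (g q : ℂ) * Complex.I := by
        have h5 : (g q : ℂ) = (ρ : ℂ) + ((F q).arg : ℂ) := by
          have h6 : g q = ρ + (F q).arg := rfl
          rw [h6]
          push_cast
          ring
        rw [h5]
        ring
      calc ((q.1 - s.1 : ℝ) : ℂ) + ((q.2 - s.2 : ℝ) : ℂ) * Complex.I
          = F q * Complex.exp ((ρ:ℂ) * Complex.I) := h4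
        _ = ((‖F q‖ : ℂ) * Complex.exp (((F q).arg : ℂ) * Complex.I))
              * Complex.exp ((ρ:ℂ) * Complex.I) := by rw [h3]
        _ = (‖F q‖ : ℂ) * Complex.exp ((g q : ℂ) * Complex.I) := by
              rw [mul_assoc, ← Complex.exp_add, hgq]
    have hq_eq : q = s + (‖F q‖) • (Real.cos (g q), Real.sin (g q)) := by
      have k1 : q.1 - s.1 = ‖F q‖ * Real.cos (g q) := by
        have := congrArg Complex.re key
        simpa [Complex.exp_mul_I, Complex.cos_ofReal_re, Complex.sin_ofReal_re] using this
      have k2 : q.2 - s.2 = ‖F q‖ * Real.sin (g q) := by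
        have := congrArg Complex.im key
        simpa [Complex.exp_mul_I, Complex.cos_ofReal_re, Complex.sin_ofReal_re] using this
      apply Prod.ext <;> simp [smul_eq_mul] <;> linarith
    rw [hq_eq]
    exact hmem _ _ (norm_nonneg _) hq1.le
  -- now the three conclusions
  refine ⟨?_, ?_, ?_⟩
  · -- injectivity
    intro ρ₁ h₁ ρ₂ h₂ hEq
    rw [hγ] at hEq
    simp only at hEq
    have hv := add_left_cancel hEq
    rw [Prod.ext_iff] at hv
    simp only [Prod.smul_mk, smul_eq_mul] at hv
    obtain ⟨e1, e2⟩ := hv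
    have hsq : (r ρ₁)^2 = (r ρ₂)^2 := by
      have hss : (r ρ₁ * Real.cos ρ₁)^2 + (r ρ₁ * Real.sin ρ₁)^2
          = (r ρ₂ * Real.cos ρ₂)^2 + (r ρ₂ * Real.sin ρ₂)^2 := by rw [e1, e2]
      nlinarith [Real.sin_sq_add_cos_sq ρ₁, Real.sin_sq_add_cos_sq ρ₂, hss]
    have hrr : r ρ₁ = r ρ₂ :=
      le_antisymm (by nlinarith [hrpos ρ₁, hrpos ρ₂]) (by nlinarith [hrpos ρ₁, hrpos ρ₂])
    rw [hrr] at e1 e2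
    have hc := mul_left_cancel₀ (ne_of_gt (hrpos ρ₂)) e1
    have hs' := mul_left_cancel₀ (ne_of_gt (hrpos ρ₂)) e2
    exact hinj_angle ρ₁ ρ₂ h₁ h₂ hc hs'
  · -- frontier
    apply Set.Subset.antisymm
    · rintro _ ⟨ρ, hρ, rfl⟩
      rw [frontier_eq_closure_inter_closure]
      constructor
      · apply subset_closure
        rw [hγ]
        exact hmem ρ (r ρ) (hrpos ρ).le le_rfl
      · have htend : Filter.Tendsto
            (fun n : ℕ => s + (r ρ + 1/(n+1)) • (Real.cos ρ, Real.sin ρ))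
            Filter.atTop (nhds (γ ρ)) := by
          rw [hγ]
          simp only
          have h0 : Filter.Tendsto (fun n : ℕ => r ρ + 1/((n:ℝ)+1)) Filter.atTop
              (nhds (r ρ)) := by
            have := tendsto_one_div_add_atTop_nhds_zero_nat (𝕜 := ℝ)
            simpa using tendsto_const_nhds.add this
          exact Filter.Tendsto.const_add s (h0.smul_const _)
        apply mem_closure_of_tendsto htend
        apply Filter.Eventually.of_forall
        intro n
        have : (0:ℝ) < 1/((n:ℝ)+1) := by positivity
        exact hout ρ _ (by linarith)
    · intro p hp
      rw [hScl.frontier_eq] at hp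
      obtain ⟨hp1, hp2⟩ := hp
      rw [hS] at hp1
      obtain ⟨ρ, hρ, t, ht, htr, rfl⟩ := hp1
      rcases eq_or_lt_of_le htr with heq | hlt
      · exact ⟨ρ, hρ, by rw [hγ, heq]⟩
      · exfalso
        apply hp2
        rcases eq_or_lt_of_le ht with h0 | h0
        · have he : s + t • (Real.cos ρ, Real.sin ρ) = s := by rw [← h0]; simp
          rw [he]
          exact hs_int
        · exact hint ρ t h0 hlt
  · -- star convexity
    intro p hp a b ha hb hab
    rw [hS] at hp
    obtain ⟨ρ, hρ, t, ht, htr, rfl⟩ := hp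
    have he : a • s + b • (s + t • (Real.cos ρ, Real.sin ρ))
        = s + (b * t) • (Real.cos ρ, Real.sin ρ) := by
      rw [smul_add, ← add_assoc, ← add_smul, hab, one_smul, smul_smul]
    rw [he]
    exact hmem ρ (b*t) (mul_nonneg hb ht)
      (le_trans (mul_le_of_le_one_left ht (by linarith)) htr)
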